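/- There is a constant C > 0 (depending only on d and l) such that for every full-rank ℤ-lattice Λ in ℝ^d: I(B_Λ) ≥ vol(S^{d−1}) · (1 + r(Λ))^{−d·l_d/2} · r(Λ)^d / d, and I(ℝ^d ∖ B_Λ) ≤ C · r(Λ)^{1 − l₁/2}. -/

import Mathlib

/- Statement 11 (Lemma `L3`): there is `C > 0` (depending only on `d`, `l`) such that
   for every full-rank ℤ-lattice `Λ` in `ℝ^d`:
   `I(B_Λ) ≥ vol(S^{d−1})·(1+r(Λ))^{−d·l_d/2}·r(Λ)^d/d` and
   `I(ℝ^d ∖ B_Λ) ≤ C·r(Λ)^{1−l₁/2}`. -/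

open MeasureTheory

namespace Stmt11

variable (d : ℕ) (l : Fin d → ℝ)

/-- `f(x) = ∏_{j=1}^d (1+|x_j|)^{−l_j/2}`. -/
noncomputable def f (x : EuclideanSpace ℝ (Fin d)) : ℝ :=
  ∏ j, (1 + |x j|) ^ (-(l j) / 2)

/-- `r(Λ) = (1/2)·min{‖b‖ : b ∈ Λ∖{0}}`. -/
noncomputable def rlat (L : Submodule ℤ (EuclideanSpace ℝ (Fin d))) : ℝ :=
  (1 / 2) * sInf {t : ℝ | ∃ b ∈ L, b ≠ 0 ∧ ‖b‖ = t}

/-- `B_Λ = {x ∈ ℝ^d : ‖x‖ ≤ r(Λ)}`. -/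
noncomputable def ball (L : Submodule ℤ (EuclideanSpace ℝ (Fin d))) :
    Set (EuclideanSpace ℝ (Fin d)) :=
  {x | ‖x‖ ≤ rlat d L}

/-- `I(D) = ∫_D f(x) dx`. -/
noncomputable def Iof (D : Set (EuclideanSpace ℝ (Fin d))) : ℝ :=
  ∫ x in D, f d l x

/-- The Euclidean surface measure `μ` on the unit sphere `S^{d−1} ⊂ ℝ^d`. -/
noncomputable def sphμ : Measure (Metric.sphere (0 : EuclideanSpace ℝ (Fin d)) 1) :=
  (volume : Measure (EuclideanSpace ℝ (Fin d))).toSphere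

/-! ### Auxiliary lemmas -/

open Real Set

/-- The 1-dimensional factor. -/
noncomputable def g (p : ℝ) (t : ℝ) : ℝ := (1 + |t|) ^ (-p / 2)

lemma g_nonneg (p t : ℝ) : 0 ≤ g p t := by
  have : (0:ℝ) ≤ 1 + |t| := by positivity
  exact Real.rpow_nonneg this _

lemma g_integrable {p : ℝ} (hp : 4 ≤ p) : Integrable (g p) := by
  have h : ((Module.finrank ℝ ℝ : ℝ)) < p / 2 := by
    simp [Module.finrank_self]; linarith
  have := integrable_one_add_norm (E := ℝ) (μ := volume) h
  unfold g
  simpa [neg_div, Real.norm_eq_abs] using this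

lemma Tset_eq (s : ℝ) : {t : ℝ | s ≤ |t|} = Iic (-s) ∪ Ici s := by
  ext t
  simp only [mem_setOf_eq, mem_union, mem_Iic, mem_Ici, le_abs]
  constructor
  · rintro (h | h)
    · right; exact h
    · left; linarith
  · rintro (h | h)
    · right; linarith
    · left; exact h

lemma Tset_meas (s : ℝ) : MeasurableSet {t : ℝ | s ≤ |t|} := by
  rw [Tset_eq]; exact measurableSet_Iic.union measurableSet_Ici

/-- 1-dimensional tail bound. -/
lemma g_tail {p q s : ℝ} (hq : 4 ≤ q) (hqp : q ≤ p) (hs : 0 < s) :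
    ∫ t in {t : ℝ | s ≤ |t|}, g p t ≤ 2 * s ^ (1 - q / 2) := by
  have hpt : ∀ t : ℝ, s ≤ t → g p t ≤ t ^ (-q / 2) := by
    intro t ht
    have ht0 : 0 < t := lt_of_lt_of_le hs ht
    have h1 : g p t ≤ (1 + |t|) ^ (-q / 2) := by
      apply Real.rpow_le_rpow_of_exponent_le (by linarith [abs_nonneg t]) (by linarith)
    refine h1.trans ?_
    have : t ≤ 1 + |t| := by rw [abs_of_pos ht0]; linarith
    exact Real.rpow_le_rpow_of_nonpos ht0 this (by linarith)
  have hIoi : ∫ t in Ioi s, g p t ≤ s ^ (1 - q / 2) := by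
    have hint : IntegrableOn (fun t : ℝ => t ^ (-q / 2)) (Ioi s) :=
      integrableOn_Ioi_rpow_of_lt (by linarith) hs
    have hle : ∫ t in Ioi s, g p t ≤ ∫ t in Ioi s, t ^ (-q / 2) := by
      apply setIntegral_mono_on ((g_integrable (le_trans hq hqp)).integrableOn) hint
        measurableSet_Ioi
      intro t ht
      exact hpt t (le_of_lt ht)
    rw [integral_Ioi_rpow_of_lt (by linarith) hs] at hle
    refine hle.trans ?_
    have h1 : -s ^ (-q / 2 + 1) / (-q / 2 + 1) = s ^ (1 - q/2) / (q / 2 - 1) := by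
      rw [show (-q/2 + 1 : ℝ) = 1 - q/2 by ring]
      rw [div_eq_div_iff (by linarith) (by linarith)]
      ring
    rw [h1]
    have hpos : 0 < s ^ (1 - q/2) := Real.rpow_pos_of_pos hs _
    rw [div_le_iff₀ (by linarith)]
    nlinarith [hpos]
  have hIci : ∫ t in Ici s, g p t ≤ s ^ (1 - q / 2) := by
    rw [integral_Ici_eq_integral_Ioi]; exact hIoi
  have hIic : ∫ t in Iic (-s), g p t ≤ s ^ (1 - q / 2) := by
    have heq : ∫ t in Iic (-s), g p t = ∫ t in Ioi s, g p t := by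
      have h2 := integral_comp_neg_Iic (-s) (g p)
      simp only [neg_neg] at h2
      rw [← h2]
      congr 1
      ext t
      simp [g, abs_neg]
    rw [heq]; exact hIoi
  have hdisj : Disjoint (Iic (-s)) (Ici s) := by
    rw [Set.disjoint_left]
    intro a ha hb
    rw [mem_Iic] at ha
    rw [mem_Ici] at hb
    linarith
  rw [Tset_eq, setIntegral_union hdisj measurableSet_Ici
    ((g_integrable (le_trans hq hqp)).integrableOn)
    ((g_integrable (le_trans hq hqp)).integrableOn)]
  linarith

variable {d l}

lemma f_eq (x : EuclideanSpace ℝ (Fin d)) : f d l x = ∏ j, g (l j) (x j) := rfl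

lemma f_nonneg (x : EuclideanSpace ℝ (Fin d)) : 0 ≤ f d l x := by
  rw [f_eq]
  exact Finset.prod_nonneg fun j _ => g_nonneg _ _

lemma integral_transfer (F : (Fin d → ℝ) → ℝ) :
    ∫ x : EuclideanSpace ℝ (Fin d), F (fun j => x j) = ∫ y : Fin d → ℝ, F y := by
  have := (EuclideanSpace.volume_preserving_symm_measurableEquiv_toLp (Fin d)).integral_comp
    (MeasurableEquiv.measurableEmbedding _) F
  simpa using this

lemma integrable_transfer (F : (Fin d → ℝ) → ℝ) (hF : Integrable F) :
    Integrable (fun x : EuclideanSpace ℝ (Fin d) => F (fun j => x j)) := by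
  have := ((EuclideanSpace.volume_preserving_symm_measurableEquiv_toLp (Fin d)).integrable_comp_emb
    (MeasurableEquiv.measurableEmbedding _)).mpr hF
  exact this

lemma f_integrable (hl4 : ∀ j, 4 ≤ l j) : Integrable (f d l) := by
  have hF : Integrable (fun y : Fin d → ℝ => ∏ j, g (l j) (y j)) :=
    Integrable.fintype_prod (f := fun j => g (l j)) (fun j => g_integrable (hl4 j))
  have := integrable_transfer _ hF
  simpa [← f_eq] using this

lemma coord_measurable (j : Fin d) :
    Measurable (fun x : EuclideanSpace ℝ (Fin d) => x j) :=
  (measurable_pi_apply j).comp (MeasurableEquiv.toLp 2 (Fin d → ℝ)).symm.measurable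

lemma coord_le_norm (x : EuclideanSpace ℝ (Fin d)) (j : Fin d) : |x j| ≤ ‖x‖ := by
  rw [EuclideanSpace.norm_eq, ← Real.sqrt_sq_eq_abs (x j)]
  apply Real.sqrt_le_sqrt
  simp only [Real.norm_eq_abs, sq_abs]
  exact Finset.single_le_sum (f := fun i => x i ^ 2) (fun i _ => sq_nonneg _) (Finset.mem_univ j)

lemma norm_le_of_coords {x : EuclideanSpace ℝ (Fin d)} {s : ℝ} (hs : 0 ≤ s)
    (h : ∀ j, |x j| ≤ s) : ‖x‖ ≤ Real.sqrt d * s := by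
  rw [EuclideanSpace.norm_eq]
  simp only [Real.norm_eq_abs, sq_abs]
  have hsum : ∑ i, x i ^ 2 ≤ d * s ^ 2 := by
    calc ∑ i, x i ^ 2 ≤ ∑ _i : Fin d, s ^ 2 := by
          apply Finset.sum_le_sum
          intro i _
          rw [← sq_abs]
          exact pow_le_pow_left₀ (abs_nonneg _) (h i) 2
      _ = d * s ^ 2 := by simp [Finset.sum_const, nsmul_eq_mul]
  calc Real.sqrt (∑ i, x i ^ 2) ≤ Real.sqrt (d * s ^ 2) := Real.sqrt_le_sqrt hsum
    _ = Real.sqrt d * s := by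
        rw [Real.sqrt_mul (Nat.cast_nonneg d), Real.sqrt_sq hs]

/-- The integral of `f` over a coordinate slab factors as a product. -/
lemma setIntegral_slab (j : Fin d) (s : ℝ) :
    ∫ x in {x : EuclideanSpace ℝ (Fin d) | s ≤ |x j|}, f d l x =
      (∫ t in {t : ℝ | s ≤ |t|}, g (l j) t) * ∏ k ∈ Finset.univ.erase j, ∫ t, g (l k) t := by
  classical
  set T : Set ℝ := {t : ℝ | s ≤ |t|} with hT
  have hTmeas : MeasurableSet T := Tset_meas s
  set h : Fin d → ℝ → ℝ := fun k => if k = j then T.indicator (g (l k)) else g (l k) with hh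
  have hA : MeasurableSet {x : EuclideanSpace ℝ (Fin d) | s ≤ |x j|} :=
    (coord_measurable j) hTmeas
  rw [← integral_indicator hA]
  have hpt : ∀ x : EuclideanSpace ℝ (Fin d),
      Set.indicator {x : EuclideanSpace ℝ (Fin d) | s ≤ |x j|} (f d l) x = ∏ k, h k (x k) := by
    intro x
    by_cases hx : x ∈ {x : EuclideanSpace ℝ (Fin d) | s ≤ |x j|}
    · rw [Set.indicator_of_mem hx, f_eq]
      apply Finset.prod_congr rfl
      intro k _
      by_cases hk : k = j
      · subst hk
        have hx' : x k ∈ T := hx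
        simp [hh, Set.indicator_of_mem hx']
      · simp [hh, hk]
    · rw [Set.indicator_of_notMem hx]
      symm
      apply Finset.prod_eq_zero (Finset.mem_univ j)
      simp only [hh, if_pos rfl]
      exact Set.indicator_of_notMem (by exact hx) _
  simp_rw [hpt]
  have htr := integral_transfer (fun y : Fin d → ℝ => ∏ k, h k (y k))
  rw [htr, MeasureTheory.integral_fintype_prod_volume_eq_prod (f := h)]
  rw [← Finset.mul_prod_erase Finset.univ _ (Finset.mem_univ j)]
  congr 1
  · simp [hh, integral_indicator hTmeas]
  · apply Finset.prod_congr rfl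
    intro k hk
    simp [hh, (Finset.mem_erase.mp hk).1]

lemma rlat_pos (hd : 1 ≤ d) (Λ : Submodule ℤ (EuclideanSpace ℝ (Fin d)))
    [DiscreteTopology Λ]
    (hspan : Submodule.span ℝ (Λ : Set (EuclideanSpace ℝ (Fin d))) = ⊤) :
    0 < rlat d Λ := by
  haveI : Nonempty (Fin d) := ⟨⟨0, hd⟩⟩
  haveI : Nontrivial (EuclideanSpace ℝ (Fin d)) := inferInstance
  rw [rlat]
  have hne : ∃ b ∈ Λ, b ≠ 0 := by
    by_contra h
    push_neg at h
    have hsub : (Λ : Set (EuclideanSpace ℝ (Fin d))) ⊆ {0} := fun b hb => h b hb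
    have hle : Submodule.span ℝ (Λ : Set (EuclideanSpace ℝ (Fin d))) ≤ ⊥ := by
      rw [← Submodule.span_zero_singleton (R := ℝ)]
      exact Submodule.span_mono hsub
    rw [hspan] at hle
    exact absurd (le_bot_iff.mp hle) top_ne_bot
  obtain ⟨b, hbΛ, hb0⟩ := hne
  have hopen : IsOpen ({0} : Set Λ) := isOpen_discrete _
  rw [Metric.isOpen_singleton_iff] at hopen
  obtain ⟨ε, hε, hball⟩ := hopen
  have hlb : ∀ t ∈ {t : ℝ | ∃ b ∈ Λ, b ≠ 0 ∧ ‖b‖ = t}, ε ≤ t := by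
    rintro t ⟨c, hcΛ, hc0, rfl⟩
    by_contra hlt
    push_neg at hlt
    have hc : (⟨c, hcΛ⟩ : Λ) = 0 := by
      apply hball
      rw [Subtype.dist_eq]
      simpa [dist_zero_right] using hlt
    exact hc0 (by simpa [Subtype.ext_iff] using hc)
  have : ε ≤ sInf {t : ℝ | ∃ b ∈ Λ, b ≠ 0 ∧ ‖b‖ = t} :=
    le_csInf ⟨‖b‖, b, hbΛ, hb0, rfl⟩ hlb
  linarith

lemma ball_eq (Λ : Submodule ℤ (EuclideanSpace ℝ (Fin d))) :
    ball d Λ = Metric.closedBall (0 : EuclideanSpace ℝ (Fin d)) (rlat d Λ) := by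
  ext x
  simp [ball, Metric.mem_closedBall, dist_zero_right]

theorem statement11 (hd : 1 ≤ d) (hl4 : ∀ j, 4 ≤ l j) (hmono : Monotone l) :
    ∃ C > (0 : ℝ), ∀ Λ : Submodule ℤ (EuclideanSpace ℝ (Fin d)),
      DiscreteTopology Λ →
      Submodule.span ℝ (Λ : Set (EuclideanSpace ℝ (Fin d))) = ⊤ →
      (((sphμ d) Set.univ).toReal *
          (1 + rlat d Λ) ^ (-(d : ℝ) * l ⟨d - 1, Nat.sub_lt hd one_pos⟩ / 2) *
          rlat d Λ ^ (d : ℕ) / d ≤ Iof d l (ball d Λ)) ∧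
      Iof d l ((Set.univ : Set (EuclideanSpace ℝ (Fin d))) \ ball d Λ) ≤
        C * rlat d Λ ^ (1 - l ⟨0, hd⟩ / 2) := by
  classical
  haveI : Nonempty (Fin d) := ⟨⟨0, hd⟩⟩
  haveI : Nontrivial (EuclideanSpace ℝ (Fin d)) := inferInstance
  set q : ℝ := l ⟨0, hd⟩ with hq
  set P : ℝ := ∏ k, max 1 (∫ t, g (l k) t) with hP
  have hP1 : 1 ≤ P := by
    rw [hP]
    calc (1:ℝ) = ∏ _k : Fin d, 1 := by simp
      _ ≤ ∏ k, max 1 (∫ t, g (l k) t) :=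
          Finset.prod_le_prod (fun k _ => zero_le_one) (fun k _ => le_max_left _ _)
  have hsd : (0:ℝ) < Real.sqrt d := Real.sqrt_pos.mpr (by exact_mod_cast hd)
  refine ⟨2 * d * Real.sqrt d ^ (q / 2 - 1) * P, by positivity, ?_⟩
  intro Λ hdisc hspan
  haveI := hdisc
  set r : ℝ := rlat d Λ with hr
  have hrpos : 0 < r := rlat_pos hd Λ hspan
  have hfint : Integrable (f d l) := f_integrable hl4
  constructor
  · -- lower bound
    set L : ℝ := l ⟨d - 1, Nat.sub_lt hd one_pos⟩ with hL
    set c : ℝ := (1 + r) ^ (-(d : ℝ) * L / 2) with hc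
    have hlL : ∀ j, l j ≤ L := by
      intro j
      apply hmono
      rw [Fin.le_def]
      exact Nat.le_sub_one_of_lt j.isLt
    have hlow : ∀ x ∈ Metric.closedBall (0 : EuclideanSpace ℝ (Fin d)) r, c ≤ f d l x := by
      intro x hx
      rw [Metric.mem_closedBall, dist_zero_right] at hx
      rw [f_eq]
      have hfac : ∀ j : Fin d, (1 + r) ^ (-L / 2) ≤ g (l j) (x j) := by
        intro j
        have hxj : |x j| ≤ r := (coord_le_norm x j).trans hx
        have h1 : (1 + r) ^ (-(l j) / 2) ≤ g (l j) (x j) := by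
          apply Real.rpow_le_rpow_of_nonpos (by positivity) (by linarith [abs_nonneg (x j)])
          linarith [hl4 j]
        refine le_trans ?_ h1
        apply Real.rpow_le_rpow_of_exponent_le (by linarith)
        have := hlL j
        linarith
      calc c = ∏ _j : Fin d, (1 + r) ^ (-L / 2) := by
            rw [Finset.prod_const, Finset.card_univ, Fintype.card_fin,
              ← Real.rpow_natCast ((1 + r) ^ (-L / 2)) d, ← Real.rpow_mul (by linarith)]
            rw [hc]
            norm_num
            ring_nf
        _ ≤ ∏ j, g (l j) (x j) :=
            Finset.prod_le_prod (fun j _ => Real.rpow_nonneg (by linarith) _)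
              (fun j _ => hfac j)
    have hkey : c * (volume (Metric.closedBall (0 : EuclideanSpace ℝ (Fin d)) r)).toReal ≤
        Iof d l (ball d Λ) := by
      rw [Iof, ball_eq]
      exact setIntegral_ge_of_const_le_real measurableSet_closedBall
        measure_closedBall_lt_top.ne hlow hfint.integrableOn
    have hvol : ((sphμ d) Set.univ).toReal * r ^ (d : ℕ) / d
        = (volume (Metric.closedBall (0 : EuclideanSpace ℝ (Fin d)) r)).toReal := by
      rw [sphμ, Measure.toSphere_apply_univ, Measure.addHaar_closedBall_eq_addHaar_ball,
        Measure.addHaar_ball _ _ hrpos.le, finrank_euclideanSpace_fin]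
      rw [ENNReal.toReal_mul, ENNReal.toReal_mul,
        ENNReal.toReal_ofReal (by positivity)]
      simp only [ENNReal.toReal_natCast]
      have hd0 : (d:ℝ) ≠ 0 := by positivity
      field_simp
    calc ((sphμ d) Set.univ).toReal * c * r ^ (d : ℕ) / d
        = c * (((sphμ d) Set.univ).toReal * r ^ (d : ℕ) / d) := by ring
      _ = c * (volume (Metric.closedBall (0 : EuclideanSpace ℝ (Fin d)) r)).toReal := by
          rw [hvol]
      _ ≤ Iof d l (ball d Λ) := hkey
  · -- upper bound
    set s : ℝ := r / Real.sqrt d with hs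
    have hspos : 0 < s := div_pos hrpos hsd
    set A : Fin d → Set (EuclideanSpace ℝ (Fin d)) := fun j => {x | s ≤ |x j|} with hA
    have hAmeas : ∀ j, MeasurableSet (A j) := fun j => (coord_measurable j) (Tset_meas s)
    have hUmeas : MeasurableSet
        ((Set.univ : Set (EuclideanSpace ℝ (Fin d))) \ ball d Λ) := by
      rw [ball_eq]
      exact MeasurableSet.univ.diff measurableSet_closedBall
    -- covering
    have hcov : ∀ x : EuclideanSpace ℝ (Fin d),
        x ∈ (Set.univ : Set (EuclideanSpace ℝ (Fin d))) \ ball d Λ → ∃ j, x ∈ A j := by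
      intro x hx
      by_contra hmem
      push_neg at hmem
      have hco : ∀ j, |x j| ≤ s := by
        intro j
        have := hmem j
        simp only [hA, mem_setOf_eq, not_le] at this
        exact this.le
      have hnorm : ‖x‖ ≤ Real.sqrt d * s := norm_le_of_coords hspos.le hco
      have : Real.sqrt d * s = r := by
        rw [hs, mul_comm, div_mul_cancel₀ _ hsd.ne']
      rw [this] at hnorm
      exact hx.2 hnorm
    -- sum bound
    have hsum : Iof d l ((Set.univ : Set (EuclideanSpace ℝ (Fin d))) \ ball d Λ)
        ≤ ∑ j, ∫ x in A j, f d l x := by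
      rw [Iof, ← integral_indicator hUmeas]
      have hterm : ∀ j : Fin d, ∫ x in A j, f d l x
          = ∫ x, (A j).indicator (f d l) x := fun j => (integral_indicator (hAmeas j)).symm
      calc ∫ x, ((Set.univ : Set (EuclideanSpace ℝ (Fin d))) \ ball d Λ).indicator (f d l) x
          ≤ ∫ x, ∑ j, (A j).indicator (f d l) x := by
            apply integral_mono (hfint.indicator hUmeas)
              (integrable_finset_sum _ fun j _ => hfint.indicator (hAmeas j))
            intro x
            by_cases hx : x ∈ (Set.univ : Set (EuclideanSpace ℝ (Fin d))) \ ball d Λ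
            · rw [Set.indicator_of_mem hx]
              obtain ⟨j, hj⟩ := hcov x hx
              calc f d l x = (A j).indicator (f d l) x := (Set.indicator_of_mem hj _).symm
                _ ≤ ∑ j, (A j).indicator (f d l) x :=
                    Finset.single_le_sum
                      (f := fun j => (A j).indicator (f d l) x)
                      (fun i _ => Set.indicator_nonneg (fun y _ => f_nonneg y) x)
                      (Finset.mem_univ j)
            · rw [Set.indicator_of_notMem hx]
              exact Finset.sum_nonneg fun i _ =>
                Set.indicator_nonneg (fun y _ => f_nonneg y) x
        _ = ∑ j, ∫ x, (A j).indicator (f d l) x :=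
            integral_finset_sum _ fun j _ => hfint.indicator (hAmeas j)
        _ = ∑ j, ∫ x in A j, f d l x := by
            simp_rw [hterm]
    -- bound each term
    have hterm : ∀ j : Fin d, ∫ x in A j, f d l x ≤ (2 * s ^ (1 - q / 2)) * P := by
      intro j
      rw [hA, setIntegral_slab j s]
      have htail : ∫ t in {t : ℝ | s ≤ |t|}, g (l j) t ≤ 2 * s ^ (1 - q / 2) := by
        apply g_tail (hl4 _) _ hspos
        apply hmono
        rw [Fin.le_def]
        exact Nat.zero_le _
      have htail0 : 0 ≤ ∫ t in {t : ℝ | s ≤ |t|}, g (l j) t :=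
        setIntegral_nonneg (Tset_meas s) fun t _ => g_nonneg _ _
      have hprod : ∏ k ∈ Finset.univ.erase j, ∫ t, g (l k) t ≤ P := by
        calc ∏ k ∈ Finset.univ.erase j, ∫ t, g (l k) t
            ≤ ∏ k ∈ Finset.univ.erase j, max 1 (∫ t, g (l k) t) :=
              Finset.prod_le_prod (fun k _ => integral_nonneg fun t => g_nonneg _ _)
                (fun k _ => le_max_right _ _)
          _ ≤ P := by
              rw [hP, ← Finset.mul_prod_erase Finset.univ
                (fun k => max 1 (∫ t, g (l k) t)) (Finset.mem_univ j)]
              exact le_mul_of_one_le_left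
                (Finset.prod_nonneg fun k _ =>
                  le_trans zero_le_one (le_max_left _ _)) (le_max_left _ _)
      have hprod0 : 0 ≤ ∏ k ∈ Finset.univ.erase j, ∫ t, g (l k) t :=
        Finset.prod_nonneg fun k _ => integral_nonneg fun t => g_nonneg _ _
      exact mul_le_mul htail hprod hprod0 (by positivity)
    -- conclude
    have hse : s ^ (1 - q / 2) = r ^ (1 - q / 2) * Real.sqrt d ^ (q / 2 - 1) := by
      have h1 : (Real.sqrt d) ^ (1 - q/2 : ℝ) = ((Real.sqrt d) ^ (q/2 - 1 : ℝ))⁻¹ := by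
        rw [show (1 - q/2 : ℝ) = -(q/2 - 1) by ring, Real.rpow_neg hsd.le]
      rw [hs, Real.div_rpow hrpos.le hsd.le, h1, div_inv_eq_mul]
    calc Iof d l ((Set.univ : Set (EuclideanSpace ℝ (Fin d))) \ ball d Λ)
        ≤ ∑ j, ∫ x in A j, f d l x := hsum
      _ ≤ ∑ _j : Fin d, (2 * s ^ (1 - q / 2)) * P :=
          Finset.sum_le_sum fun j _ => hterm j
      _ = d * ((2 * s ^ (1 - q / 2)) * P) := by
          rw [Finset.sum_const, Finset.card_univ, Fintype.card_fin, nsmul_eq_mul]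
      _ = 2 * d * Real.sqrt d ^ (q / 2 - 1) * P * r ^ (1 - q / 2) := by
          rw [hse]; ring

end Stmt11
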